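/- With the Laplacian −Δ = −a E₁² − b E₂² − c E₃² of the left-invariant metric h_{a,b,c} on SU(2), the functions ζ₁ and ζ₂ are eigenfunctions with eigenvalue a + b + c; ζ₁² − conj(ζ₂)² and ζ₁ζ₂ + conj(ζ₁)conj(ζ₂) are eigenfunctions with eigenvalue 4(b+c); ζ₁² + conj(ζ₂)² and ζ₁ζ₂ − conj(ζ₁)conj(ζ₂) with eigenvalue 4(c+a); and ζ₁·conj(ζ₂) and |ζ₁|² − |ζ₂|² with eigenvalue 4(a+b). -/
import Mathlib


/- STATEMENT 11: eigenfunctions of the Laplacian `−Δ = −aE₁² − bE₂² − cE₃²` of the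
left-invariant metric `h_{a,b,c}` on SU(2):
`ζ₁, ζ₂` with eigenvalue `a+b+c`;
`ζ₁² − ζ̄₂², ζ₁ζ₂ + ζ̄₁ζ̄₂` with eigenvalue `4(b+c)`;
`ζ₁² + ζ̄₂², ζ₁ζ₂ − ζ̄₁ζ̄₂` with eigenvalue `4(c+a)`;
`ζ₁ζ̄₂, |ζ₁|² − |ζ₂|²` with eigenvalue `4(a+b)`. -/


open Complex

/-- `SU(2)`, identified with the unit sphere `{(ζ₁,ζ₂) : |ζ₁|² + |ζ₂|² = 1}` in `ℂ²`. -/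
def SU2 : Set (ℂ × ℂ) := {ζ | Complex.normSq ζ.1 + Complex.normSq ζ.2 = 1}

/-- The values of the left-invariant vector fields `E₁, E₂, E₃` of `SU(2)`, viewed as
vector fields on `ℂ²` tangent to the unit sphere:
`E₁ = (−i ζ̄₂, i ζ̄₁)`, `E₂ = (ζ̄₂, −ζ̄₁)`, `E₃ = (i ζ₁, i ζ₂)`. -/
noncomputable def Evf : Fin 3 → ℂ × ℂ → ℂ × ℂ
  | 0 => fun ζ => (-Complex.I * (starRingEnd ℂ) ζ.2, Complex.I * (starRingEnd ℂ) ζ.1)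
  | 1 => fun ζ => ((starRingEnd ℂ) ζ.2, -(starRingEnd ℂ) ζ.1)
  | 2 => fun ζ => (Complex.I * ζ.1, Complex.I * ζ.2)

/-- Differentiation along the left-invariant vector field `E_i`. -/
noncomputable def Eop {F : Type*} [NormedAddCommGroup F] [NormedSpace ℝ F] (i : Fin 3)
    (f : ℂ × ℂ → F) (ζ : ℂ × ℂ) : F := fderiv ℝ f ζ (Evf i ζ)

/-- The positive Laplacian `−Δ = −aE₁² − bE₂² − cE₃²` of `h_{a,b,c}`, acting on
complex-valued functions. -/
noncomputable def LapABC (a b c : ℝ) (f : ℂ × ℂ → ℂ) (ζ : ℂ × ℂ) : ℂ :=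
  -((a : ℂ) * Eop 0 (Eop 0 f) ζ + (b : ℂ) * Eop 1 (Eop 1 f) ζ + (c : ℂ) * Eop 2 (Eop 2 f) ζ)

noncomputable def Q (a1 a2 a3 a4 b11 b12 b13 b14 b22 b23 b24 b33 b34 b44 : ℂ)
    (z : ℂ × ℂ) : ℂ :=
  a1 * z.1 + a2 * z.2 + a3 * (starRingEnd ℂ) z.1 + a4 * (starRingEnd ℂ) z.2
  + b11 * (z.1 * z.1) + b12 * (z.1 * z.2) + b13 * (z.1 * (starRingEnd ℂ) z.1)
  + b14 * (z.1 * (starRingEnd ℂ) z.2) + b22 * (z.2 * z.2)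
  + b23 * (z.2 * (starRingEnd ℂ) z.1) + b24 * (z.2 * (starRingEnd ℂ) z.2)
  + b33 * ((starRingEnd ℂ) z.1 * (starRingEnd ℂ) z.1)
  + b34 * ((starRingEnd ℂ) z.1 * (starRingEnd ℂ) z.2)
  + b44 * ((starRingEnd ℂ) z.2 * (starRingEnd ℂ) z.2)

lemma Eop_Q (a1 a2 a3 a4 b11 b12 b13 b14 b22 b23 b24 b33 b34 b44 : ℂ) (i : Fin 3) (ζ : ℂ × ℂ) :
    Eop i (Q a1 a2 a3 a4 b11 b12 b13 b14 b22 b23 b24 b33 b34 b44) ζ =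
      a1 * (Evf i ζ).1 + a2 * (Evf i ζ).2 + a3 * (starRingEnd ℂ) (Evf i ζ).1
      + a4 * (starRingEnd ℂ) (Evf i ζ).2
      + b11 * ((Evf i ζ).1 * ζ.1 + ζ.1 * (Evf i ζ).1)
      + b12 * ((Evf i ζ).1 * ζ.2 + ζ.1 * (Evf i ζ).2)
      + b13 * ((Evf i ζ).1 * (starRingEnd ℂ) ζ.1 + ζ.1 * (starRingEnd ℂ) (Evf i ζ).1)
      + b14 * ((Evf i ζ).1 * (starRingEnd ℂ) ζ.2 + ζ.1 * (starRingEnd ℂ) (Evf i ζ).2)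
      + b22 * ((Evf i ζ).2 * ζ.2 + ζ.2 * (Evf i ζ).2)
      + b23 * ((Evf i ζ).2 * (starRingEnd ℂ) ζ.1 + ζ.2 * (starRingEnd ℂ) (Evf i ζ).1)
      + b24 * ((Evf i ζ).2 * (starRingEnd ℂ) ζ.2 + ζ.2 * (starRingEnd ℂ) (Evf i ζ).2)
      + b33 * ((starRingEnd ℂ) (Evf i ζ).1 * (starRingEnd ℂ) ζ.1
          + (starRingEnd ℂ) ζ.1 * (starRingEnd ℂ) (Evf i ζ).1)
      + b34 * ((starRingEnd ℂ) (Evf i ζ).1 * (starRingEnd ℂ) ζ.2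
          + (starRingEnd ℂ) ζ.1 * (starRingEnd ℂ) (Evf i ζ).2)
      + b44 * ((starRingEnd ℂ) (Evf i ζ).2 * (starRingEnd ℂ) ζ.2
          + (starRingEnd ℂ) ζ.2 * (starRingEnd ℂ) (Evf i ζ).2) := by
  have h1 : HasFDerivAt (fun z : ℂ × ℂ => z.1) (ContinuousLinearMap.fst ℝ ℂ ℂ) ζ :=
    hasFDerivAt_fst
  have h2 : HasFDerivAt (fun z : ℂ × ℂ => z.2) (ContinuousLinearMap.snd ℝ ℂ ℂ) ζ :=
    hasFDerivAt_snd
  have h3 : HasFDerivAt (fun z : ℂ × ℂ => (starRingEnd ℂ) z.1)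
      ((Complex.conjCLE.toContinuousLinearMap).comp (ContinuousLinearMap.fst ℝ ℂ ℂ)) ζ :=
    Complex.conjCLE.hasFDerivAt.comp ζ hasFDerivAt_fst
  have h4 : HasFDerivAt (fun z : ℂ × ℂ => (starRingEnd ℂ) z.2)
      ((Complex.conjCLE.toContinuousLinearMap).comp (ContinuousLinearMap.snd ℝ ℂ ℂ)) ζ :=
    Complex.conjCLE.hasFDerivAt.comp ζ hasFDerivAt_snd
  have H := ((((((((((((((h1.const_mul a1).add (h2.const_mul a2)).add
    ((h3.const_mul a3))).add (h4.const_mul a4)).add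
    ((h1.mul h1).const_mul b11)).add ((h1.mul h2).const_mul b12)).add
    ((h1.mul h3).const_mul b13)).add ((h1.mul h4).const_mul b14)).add
    ((h2.mul h2).const_mul b22)).add ((h2.mul h3).const_mul b23)).add
    ((h2.mul h4).const_mul b24)).add ((h3.mul h3).const_mul b33)).add
    ((h3.mul h4).const_mul b34)).add ((h4.mul h4).const_mul b44))
  have H2 : HasFDerivAt (Q a1 a2 a3 a4 b11 b12 b13 b14 b22 b23 b24 b33 b34 b44) _ ζ := H
  rw [Eop, H2.fderiv]
  simp [ContinuousLinearMap.smul_apply, smul_eq_mul]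
  ring

theorem stmt_11 (a b c : ℝ) (ha : 0 < a) (hb : 0 < b) (hc : 0 < c) : ∀ ζ ∈ SU2,
    (LapABC a b c (fun z => z.1) ζ = ((a + b + c : ℝ) : ℂ) * ζ.1) ∧
    (LapABC a b c (fun z => z.2) ζ = ((a + b + c : ℝ) : ℂ) * ζ.2) ∧
    (LapABC a b c (fun z => z.1 ^ 2 - ((starRingEnd ℂ) z.2) ^ 2) ζ
      = ((4 * (b + c) : ℝ) : ℂ) * (ζ.1 ^ 2 - ((starRingEnd ℂ) ζ.2) ^ 2)) ∧
    (LapABC a b c (fun z => z.1 * z.2 + (starRingEnd ℂ) z.1 * (starRingEnd ℂ) z.2) ζ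
      = ((4 * (b + c) : ℝ) : ℂ) * (ζ.1 * ζ.2 + (starRingEnd ℂ) ζ.1 * (starRingEnd ℂ) ζ.2)) ∧
    (LapABC a b c (fun z => z.1 ^ 2 + ((starRingEnd ℂ) z.2) ^ 2) ζ
      = ((4 * (c + a) : ℝ) : ℂ) * (ζ.1 ^ 2 + ((starRingEnd ℂ) ζ.2) ^ 2)) ∧
    (LapABC a b c (fun z => z.1 * z.2 - (starRingEnd ℂ) z.1 * (starRingEnd ℂ) z.2) ζ
      = ((4 * (c + a) : ℝ) : ℂ) * (ζ.1 * ζ.2 - (starRingEnd ℂ) ζ.1 * (starRingEnd ℂ) ζ.2)) ∧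
    (LapABC a b c (fun z => z.1 * (starRingEnd ℂ) z.2) ζ
      = ((4 * (a + b) : ℝ) : ℂ) * (ζ.1 * (starRingEnd ℂ) ζ.2)) ∧
    (LapABC a b c (fun z => ((Complex.normSq z.1 - Complex.normSq z.2 : ℝ) : ℂ)) ζ
      = ((4 * (a + b) : ℝ) : ℂ) * ((Complex.normSq ζ.1 - Complex.normSq ζ.2 : ℝ) : ℂ)) := by
  intro ζ _
  refine ⟨?_, ?_, ?_, ?_, ?_, ?_, ?_, ?_⟩
  · -- function 0
    have hF : (fun z => z.1) = Q (1) (0) (0) (0) (0) (0) (0) (0) (0) (0) (0) (0) (0) (0) := by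
      funext z
      simp only [Q]
      ring
    have hg0 : Eop 0 (Q (1) (0) (0) (0) (0) (0) (0) (0) (0) (0) (0) (0) (0) (0)) = Q (0) (0) (0) (-Complex.I) (0) (0) (0) (0) (0) (0) (0) (0) (0) (0) := by
      funext z
      rw [Eop_Q]
      simp only [Evf, Q, map_mul, map_neg, map_one, Complex.conj_conj, Complex.conj_I]
      ring
    have hg1 : Eop 1 (Q (1) (0) (0) (0) (0) (0) (0) (0) (0) (0) (0) (0) (0) (0)) = Q (0) (0) (0) (1) (0) (0) (0) (0) (0) (0) (0) (0) (0) (0) := by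
      funext z
      rw [Eop_Q]
      simp only [Evf, Q, map_mul, map_neg, map_one, Complex.conj_conj, Complex.conj_I]
      ring
    have hg2 : Eop 2 (Q (1) (0) (0) (0) (0) (0) (0) (0) (0) (0) (0) (0) (0) (0)) = Q (Complex.I) (0) (0) (0) (0) (0) (0) (0) (0) (0) (0) (0) (0) (0) := by
      funext z
      rw [Eop_Q]
      simp only [Evf, Q, map_mul, map_neg, map_one, Complex.conj_conj, Complex.conj_I]
      ring
    rw [hF, LapABC, hg0, hg1, hg2, Eop_Q, Eop_Q, Eop_Q]
    simp only [Evf, Q, map_mul, map_neg, map_one, Complex.conj_conj, Complex.conj_I]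
    push_cast
    ring_nf
    simp only [Complex.I_sq]
    ring
  · -- function 1
    have hF : (fun z => z.2) = Q (0) (1) (0) (0) (0) (0) (0) (0) (0) (0) (0) (0) (0) (0) := by
      funext z
      simp only [Q]
      ring
    have hg0 : Eop 0 (Q (0) (1) (0) (0) (0) (0) (0) (0) (0) (0) (0) (0) (0) (0)) = Q (0) (0) (Complex.I) (0) (0) (0) (0) (0) (0) (0) (0) (0) (0) (0) := by
      funext z
      rw [Eop_Q]
      simp only [Evf, Q, map_mul, map_neg, map_one, Complex.conj_conj, Complex.conj_I]
      ring
    have hg1 : Eop 1 (Q (0) (1) (0) (0) (0) (0) (0) (0) (0) (0) (0) (0) (0) (0)) = Q (0) (0) (-1) (0) (0) (0) (0) (0) (0) (0) (0) (0) (0) (0) := by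
      funext z
      rw [Eop_Q]
      simp only [Evf, Q, map_mul, map_neg, map_one, Complex.conj_conj, Complex.conj_I]
      ring
    have hg2 : Eop 2 (Q (0) (1) (0) (0) (0) (0) (0) (0) (0) (0) (0) (0) (0) (0)) = Q (0) (Complex.I) (0) (0) (0) (0) (0) (0) (0) (0) (0) (0) (0) (0) := by
      funext z
      rw [Eop_Q]
      simp only [Evf, Q, map_mul, map_neg, map_one, Complex.conj_conj, Complex.conj_I]
      ring
    rw [hF, LapABC, hg0, hg1, hg2, Eop_Q, Eop_Q, Eop_Q]
    simp only [Evf, Q, map_mul, map_neg, map_one, Complex.conj_conj, Complex.conj_I]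
    push_cast
    ring_nf
    simp only [Complex.I_sq]
    ring
  · -- function 2
    have hF : (fun z => z.1 ^ 2 - ((starRingEnd ℂ) z.2) ^ 2) = Q (0) (0) (0) (0) (1) (0) (0) (0) (0) (0) (0) (0) (0) (-1) := by
      funext z
      simp only [Q]
      ring
    have hg0 : Eop 0 (Q (0) (0) (0) (0) (1) (0) (0) (0) (0) (0) (0) (0) (0) (-1)) = Q (0) (0) (0) (0) (0) (0) (0) (0) (0) (0) (0) (0) (0) (0) := by
      funext z
      rw [Eop_Q]
      simp only [Evf, Q, map_mul, map_neg, map_one, Complex.conj_conj, Complex.conj_I]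
      ring
    have hg1 : Eop 1 (Q (0) (0) (0) (0) (1) (0) (0) (0) (0) (0) (0) (0) (0) (-1)) = Q (0) (0) (0) (0) (0) (0) (0) (4) (0) (0) (0) (0) (0) (0) := by
      funext z
      rw [Eop_Q]
      simp only [Evf, Q, map_mul, map_neg, map_one, Complex.conj_conj, Complex.conj_I]
      ring
    have hg2 : Eop 2 (Q (0) (0) (0) (0) (1) (0) (0) (0) (0) (0) (0) (0) (0) (-1)) = Q (0) (0) (0) (0) ((2)*Complex.I) (0) (0) (0) (0) (0) (0) (0) (0) ((2)*Complex.I) := by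
      funext z
      rw [Eop_Q]
      simp only [Evf, Q, map_mul, map_neg, map_one, Complex.conj_conj, Complex.conj_I]
      ring
    rw [hF, LapABC, hg0, hg1, hg2, Eop_Q, Eop_Q, Eop_Q]
    simp only [Evf, Q, map_mul, map_neg, map_one, Complex.conj_conj, Complex.conj_I]
    push_cast
    ring_nf
    simp only [Complex.I_sq]
    ring
  · -- function 3
    have hF : (fun z => z.1 * z.2 + (starRingEnd ℂ) z.1 * (starRingEnd ℂ) z.2) = Q (0) (0) (0) (0) (0) (1) (0) (0) (0) (0) (0) (0) (1) (0) := by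
      funext z
      simp only [Q]
      ring
    have hg0 : Eop 0 (Q (0) (0) (0) (0) (0) (1) (0) (0) (0) (0) (0) (0) (1) (0)) = Q (0) (0) (0) (0) (0) (0) (0) (0) (0) (0) (0) (0) (0) (0) := by
      funext z
      rw [Eop_Q]
      simp only [Evf, Q, map_mul, map_neg, map_one, Complex.conj_conj, Complex.conj_I]
      ring
    have hg1 : Eop 1 (Q (0) (0) (0) (0) (0) (1) (0) (0) (0) (0) (0) (0) (1) (0)) = Q (0) (0) (0) (0) (0) (0) (-2) (0) (0) (0) (2) (0) (0) (0) := by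
      funext z
      rw [Eop_Q]
      simp only [Evf, Q, map_mul, map_neg, map_one, Complex.conj_conj, Complex.conj_I]
      ring
    have hg2 : Eop 2 (Q (0) (0) (0) (0) (0) (1) (0) (0) (0) (0) (0) (0) (1) (0)) = Q (0) (0) (0) (0) (0) ((2)*Complex.I) (0) (0) (0) (0) (0) (0) ((-2)*Complex.I) (0) := by
      funext z
      rw [Eop_Q]
      simp only [Evf, Q, map_mul, map_neg, map_one, Complex.conj_conj, Complex.conj_I]
      ring
    rw [hF, LapABC, hg0, hg1, hg2, Eop_Q, Eop_Q, Eop_Q]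
    simp only [Evf, Q, map_mul, map_neg, map_one, Complex.conj_conj, Complex.conj_I]
    push_cast
    ring_nf
    simp only [Complex.I_sq]
    ring
  · -- function 4
    have hF : (fun z => z.1 ^ 2 + ((starRingEnd ℂ) z.2) ^ 2) = Q (0) (0) (0) (0) (1) (0) (0) (0) (0) (0) (0) (0) (0) (1) := by
      funext z
      simp only [Q]
      ring
    have hg0 : Eop 0 (Q (0) (0) (0) (0) (1) (0) (0) (0) (0) (0) (0) (0) (0) (1)) = Q (0) (0) (0) (0) (0) (0) (0) ((-4)*Complex.I) (0) (0) (0) (0) (0) (0) := by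
      funext z
      rw [Eop_Q]
      simp only [Evf, Q, map_mul, map_neg, map_one, Complex.conj_conj, Complex.conj_I]
      ring
    have hg1 : Eop 1 (Q (0) (0) (0) (0) (1) (0) (0) (0) (0) (0) (0) (0) (0) (1)) = Q (0) (0) (0) (0) (0) (0) (0) (0) (0) (0) (0) (0) (0) (0) := by
      funext z
      rw [Eop_Q]
      simp only [Evf, Q, map_mul, map_neg, map_one, Complex.conj_conj, Complex.conj_I]
      ring
    have hg2 : Eop 2 (Q (0) (0) (0) (0) (1) (0) (0) (0) (0) (0) (0) (0) (0) (1)) = Q (0) (0) (0) (0) ((2)*Complex.I) (0) (0) (0) (0) (0) (0) (0) (0) ((-2)*Complex.I) := by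
      funext z
      rw [Eop_Q]
      simp only [Evf, Q, map_mul, map_neg, map_one, Complex.conj_conj, Complex.conj_I]
      ring
    rw [hF, LapABC, hg0, hg1, hg2, Eop_Q, Eop_Q, Eop_Q]
    simp only [Evf, Q, map_mul, map_neg, map_one, Complex.conj_conj, Complex.conj_I]
    push_cast
    ring_nf
    simp only [Complex.I_sq]
    ring
  · -- function 5
    have hF : (fun z => z.1 * z.2 - (starRingEnd ℂ) z.1 * (starRingEnd ℂ) z.2) = Q (0) (0) (0) (0) (0) (1) (0) (0) (0) (0) (0) (0) (-1) (0) := by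
      funext z
      simp only [Q]
      ring
    have hg0 : Eop 0 (Q (0) (0) (0) (0) (0) (1) (0) (0) (0) (0) (0) (0) (-1) (0)) = Q (0) (0) (0) (0) (0) (0) ((2)*Complex.I) (0) (0) (0) ((-2)*Complex.I) (0) (0) (0) := by
      funext z
      rw [Eop_Q]
      simp only [Evf, Q, map_mul, map_neg, map_one, Complex.conj_conj, Complex.conj_I]
      ring
    have hg1 : Eop 1 (Q (0) (0) (0) (0) (0) (1) (0) (0) (0) (0) (0) (0) (-1) (0)) = Q (0) (0) (0) (0) (0) (0) (0) (0) (0) (0) (0) (0) (0) (0) := by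
      funext z
      rw [Eop_Q]
      simp only [Evf, Q, map_mul, map_neg, map_one, Complex.conj_conj, Complex.conj_I]
      ring
    have hg2 : Eop 2 (Q (0) (0) (0) (0) (0) (1) (0) (0) (0) (0) (0) (0) (-1) (0)) = Q (0) (0) (0) (0) (0) ((2)*Complex.I) (0) (0) (0) (0) (0) (0) ((2)*Complex.I) (0) := by
      funext z
      rw [Eop_Q]
      simp only [Evf, Q, map_mul, map_neg, map_one, Complex.conj_conj, Complex.conj_I]
      ring
    rw [hF, LapABC, hg0, hg1, hg2, Eop_Q, Eop_Q, Eop_Q]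
    simp only [Evf, Q, map_mul, map_neg, map_one, Complex.conj_conj, Complex.conj_I]
    push_cast
    ring_nf
    simp only [Complex.I_sq]
    ring
  · -- function 6
    have hF : (fun z => z.1 * (starRingEnd ℂ) z.2) = Q (0) (0) (0) (0) (0) (0) (0) (1) (0) (0) (0) (0) (0) (0) := by
      funext z
      simp only [Q]
      ring
    have hg0 : Eop 0 (Q (0) (0) (0) (0) (0) (0) (0) (1) (0) (0) (0) (0) (0) (0)) = Q (0) (0) (0) (0) (-Complex.I) (0) (0) (0) (0) (0) (0) (0) (0) (-Complex.I) := by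
      funext z
      rw [Eop_Q]
      simp only [Evf, Q, map_mul, map_neg, map_one, Complex.conj_conj, Complex.conj_I]
      ring
    have hg1 : Eop 1 (Q (0) (0) (0) (0) (0) (0) (0) (1) (0) (0) (0) (0) (0) (0)) = Q (0) (0) (0) (0) (-1) (0) (0) (0) (0) (0) (0) (0) (0) (1) := by
      funext z
      rw [Eop_Q]
      simp only [Evf, Q, map_mul, map_neg, map_one, Complex.conj_conj, Complex.conj_I]
      ring
    have hg2 : Eop 2 (Q (0) (0) (0) (0) (0) (0) (0) (1) (0) (0) (0) (0) (0) (0)) = Q (0) (0) (0) (0) (0) (0) (0) (0) (0) (0) (0) (0) (0) (0) := by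
      funext z
      rw [Eop_Q]
      simp only [Evf, Q, map_mul, map_neg, map_one, Complex.conj_conj, Complex.conj_I]
      ring
    rw [hF, LapABC, hg0, hg1, hg2, Eop_Q, Eop_Q, Eop_Q]
    simp only [Evf, Q, map_mul, map_neg, map_one, Complex.conj_conj, Complex.conj_I]
    push_cast
    ring_nf
    simp only [Complex.I_sq]
    ring
  · -- function 7
    have hF : (fun z => ((Complex.normSq z.1 - Complex.normSq z.2 : ℝ) : ℂ)) = Q (0) (0) (0) (0) (0) (0) (1) (0) (0) (0) (-1) (0) (0) (0) := by
      funext z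
      simp only [Complex.ofReal_sub, ← Complex.mul_conj]
      simp only [Q]
      ring
    have hg0 : Eop 0 (Q (0) (0) (0) (0) (0) (0) (1) (0) (0) (0) (-1) (0) (0) (0)) = Q (0) (0) (0) (0) (0) ((2)*Complex.I) (0) (0) (0) (0) (0) (0) ((-2)*Complex.I) (0) := by
      funext z
      rw [Eop_Q]
      simp only [Evf, Q, map_mul, map_neg, map_one, Complex.conj_conj, Complex.conj_I]
      ring
    have hg1 : Eop 1 (Q (0) (0) (0) (0) (0) (0) (1) (0) (0) (0) (-1) (0) (0) (0)) = Q (0) (0) (0) (0) (0) (2) (0) (0) (0) (0) (0) (0) (2) (0) := by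
      funext z
      rw [Eop_Q]
      simp only [Evf, Q, map_mul, map_neg, map_one, Complex.conj_conj, Complex.conj_I]
      ring
    have hg2 : Eop 2 (Q (0) (0) (0) (0) (0) (0) (1) (0) (0) (0) (-1) (0) (0) (0)) = Q (0) (0) (0) (0) (0) (0) (0) (0) (0) (0) (0) (0) (0) (0) := by
      funext z
      rw [Eop_Q]
      simp only [Evf, Q, map_mul, map_neg, map_one, Complex.conj_conj, Complex.conj_I]
      ring
    rw [hF, LapABC, hg0, hg1, hg2, Eop_Q, Eop_Q, Eop_Q]
    simp only [Evf, Q, map_mul, map_neg, map_one, Complex.conj_conj, Complex.conj_I]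
    simp only [Complex.ofReal_sub, ← Complex.mul_conj]
    push_cast
    ring_nf
    simp only [Complex.I_sq]
    ring
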